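/- Let q be a real number with 0 < q < 1 and let N ≥ 2 be an integer. Then there is no integer k with −2N+2 ≤ k ≤ −N−1 or 2 ≤ k ≤ N−1 such that q^{2k} (q^{2N} + 1) = q² + 1. Equivalently, for such k the quantity q² [N+k−1]_{q²} + [k]_{q²} is nonzero (strictly positive if k > 0 and strictly negative if k ≤ −N). -/

import Mathlib

/-- The q-integer `[n]_s = (s^n - 1)/(s - 1)` for integer `n`. -/
noncomputable def qzint (s : ℝ) (n : ℤ) : ℝ := (s ^ n - 1) / (s - 1)

theorem no_common_root_criterion
    (q : ℝ) (hq0 : 0 < q) (hq1 : q < 1) (N : ℤ) (hN : 2 ≤ N)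
    :
    ∀ k : ℤ, ((-2 * N + 2 ≤ k ∧ k ≤ -N - 1) ∨ (2 ≤ k ∧ k ≤ N - 1)) →
      q ^ (2 * k) * (q ^ (2 * N) + 1) ≠ q ^ 2 + 1 ∧
      q ^ 2 * qzint (q ^ 2) (N + k - 1) + qzint (q ^ 2) k ≠ 0 ∧
      (0 < k → 0 < q ^ 2 * qzint (q ^ 2) (N + k - 1) + qzint (q ^ 2) k) ∧
      (k ≤ -N → q ^ 2 * qzint (q ^ 2) (N + k - 1) + qzint (q ^ 2) k < 0) := by
  intro k hk
  set s : ℝ := q ^ 2 with hs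
  have hs0 : 0 < s := by positivity
  have hs1 : s < 1 := by
    nlinarith
  have hsne : s ≠ 0 := ne_of_gt hs0
  have hsub : s - 1 < 0 := by linarith
  -- rewrite q-powers in terms of s-zpowers
  have hs2 : q ^ (2:ℤ) = s := by rw [hs, ← zpow_natCast q 2]; norm_num
  have h2k : q ^ (2 * k) = s ^ k := by rw [zpow_mul, hs2]
  have h2N : q ^ (2 * N) = s ^ N := by rw [zpow_mul, hs2]
  -- the combined expression
  have hE : s * qzint s (N + k - 1) + qzint s k
      = (s ^ k * (s ^ N + 1) - (s + 1)) / (s - 1) := by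
    unfold qzint
    rw [← mul_div_assoc, ← add_div]
    congr 1
    have h1 : s * s ^ (N + k - 1) = s ^ (N + k) := by
      rw [show N + k = 1 + (N + k - 1) by ring, zpow_add₀ hsne, zpow_one]
      congr 2
      ring
    have h2 : s ^ (N + k) = s ^ N * s ^ k := (zpow_add₀ hsne N k)
    rw [mul_sub, h1, h2]
    ring
  -- sign of the numerator
  have key : (k ≤ -N - 1 → s + 1 < s ^ k * (s ^ N + 1)) ∧
      (2 ≤ k → k ≤ N - 1 → s ^ k * (s ^ N + 1) < s + 1) := by
    constructor
    · intro hk1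
      have hNk : N + k ≤ -1 := by linarith
      have h1 : s ^ (-1 : ℤ) ≤ s ^ (N + k) :=
        zpow_le_zpow_right_of_le_one₀ hs0 hs1.le hNk
      have h2 : s ^ (-1 : ℤ) ≤ s ^ k :=
        zpow_le_zpow_right_of_le_one₀ hs0 hs1.le (by linarith)
      have hinv : (1 : ℝ) < s ^ (-1 : ℤ) := by
        rw [zpow_neg, zpow_one]
        exact (one_lt_inv₀ hs0).mpr hs1
      have hmul : s ^ k * (s ^ N + 1) = s ^ (N + k) + s ^ k := by
        rw [zpow_add₀ hsne]; ring
      rw [hmul]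
      have : s < s ^ (N + k) := by linarith
      linarith
    · intro hk2 hk3
      have h1 : s ^ k ≤ s ^ (2 : ℤ) :=
        zpow_le_zpow_right_of_le_one₀ hs0 hs1.le hk2
      have h2 : s ^ (2 : ℤ) = s * s := by
        rw [show (2:ℤ) = 1 + 1 by norm_num, zpow_add₀ hsne, zpow_one]
      have hsN : s ^ N < 1 := by
        calc s ^ N ≤ s ^ (1 : ℤ) :=
              zpow_le_zpow_right_of_le_one₀ hs0 hs1.le (by linarith)
          _ = s := zpow_one s
          _ < 1 := hs1
      have hsNpos : 0 < s ^ N := zpow_pos hs0 N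
      have hskpos : 0 < s ^ k := zpow_pos hs0 k
      have : s ^ k * (s ^ N + 1) ≤ s * s * (s ^ N + 1) := by
        rw [← h2]
        apply mul_le_mul_of_nonneg_right h1 (by linarith)
      nlinarith [mul_pos hs0 hs0]
  rcases hk with ⟨hka, hkb⟩ | ⟨hka, hkb⟩
  · have hnum : 0 < s ^ k * (s ^ N + 1) - (s + 1) := by
      have := key.1 hkb; linarith
    have hEneg : s * qzint s (N + k - 1) + qzint s k < 0 := by
      rw [hE]; exact div_neg_of_pos_of_neg hnum hsub
    refine ⟨?_, ne_of_lt hEneg, ?_, fun _ => hEneg⟩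
    · rw [h2k, h2N]
      intro h
      linarith [hnum]
    · intro hk0; exfalso; linarith
  · have hnum : s ^ k * (s ^ N + 1) - (s + 1) < 0 := by
      have := key.2 hka hkb; linarith
    have hEpos : 0 < s * qzint s (N + k - 1) + qzint s k := by
      rw [hE]; exact div_pos_of_neg_of_neg hnum hsub
    refine ⟨?_, ne_of_gt hEpos, fun _ => hEpos, ?_⟩
    · rw [h2k, h2N]
      intro h
      linarith [hnum]
    · intro hk0; exfalso; linarith
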